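/- For complex numbers y, z with |y| < 1, |z| < 1, and real s, t with s + t = 1: ∑ over pairs of coprime positive integers (a,b) of (1/(a^s b^t)) · (−log(1 − y^a z^b)) equals (∑_{i≥1} y^i / i^s) · (∑_{j≥1} z^j / j^t). -/

import Mathlib

open Complex

noncomputable section

private abbrev Pcop (p : ℕ × ℕ) : Prop := 0 < p.1 ∧ 0 < p.2 ∧ Nat.gcd p.1 p.2 = 1

private def Ecop : {p : ℕ × ℕ // Pcop p} × ℕ ≃ ℕ × ℕ where
  toFun x := (x.1.1.1 * (x.2 + 1) - 1, x.1.1.2 * (x.2 + 1) - 1)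
  invFun q :=
    (⟨((q.1 + 1) / Nat.gcd (q.1 + 1) (q.2 + 1), (q.2 + 1) / Nat.gcd (q.1 + 1) (q.2 + 1)),
      Nat.div_pos (Nat.le_of_dvd (Nat.succ_pos _) (Nat.gcd_dvd_left _ _))
        (Nat.gcd_pos_of_pos_left _ (Nat.succ_pos _)),
      Nat.div_pos (Nat.le_of_dvd (Nat.succ_pos _) (Nat.gcd_dvd_right _ _))
        (Nat.gcd_pos_of_pos_left _ (Nat.succ_pos _)),
      Nat.coprime_div_gcd_div_gcd (Nat.gcd_pos_of_pos_left _ (Nat.succ_pos _))⟩,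
      Nat.gcd (q.1 + 1) (q.2 + 1) - 1)
  left_inv := by
    rintro ⟨⟨⟨a, b⟩, ha, hb, hco⟩, m⟩
    have ha1 : 1 ≤ a * (m + 1) := Nat.one_le_iff_ne_zero.mpr (by positivity)
    have hb1 : 1 ≤ b * (m + 1) := Nat.one_le_iff_ne_zero.mpr (by positivity)
    have hi : a * (m + 1) - 1 + 1 = a * (m + 1) := Nat.succ_pred_eq_of_pos ha1
    have hj : b * (m + 1) - 1 + 1 = b * (m + 1) := Nat.succ_pred_eq_of_pos hb1
    have hg : Nat.gcd (a * (m + 1)) (b * (m + 1)) = m + 1 := by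
      rw [Nat.gcd_mul_right, hco, one_mul]
    simp only [Prod.mk.injEq, Subtype.mk.injEq, hi, hj, hg]
    refine ⟨⟨?_, ?_⟩, rfl⟩ <;> simp [Nat.mul_div_cancel]
  right_inv := by
    rintro ⟨i, j⟩
    have hg : 0 < Nat.gcd (i + 1) (j + 1) := Nat.gcd_pos_of_pos_left _ (Nat.succ_pos _)
    have hg1 : Nat.gcd (i + 1) (j + 1) - 1 + 1 = Nat.gcd (i + 1) (j + 1) :=
      Nat.succ_pred_eq_of_pos hg
    simp only [Prod.mk.injEq, hg1]
    constructor
    · rw [Nat.div_mul_cancel (Nat.gcd_dvd_left _ _)]; omega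
    · rw [Nat.div_mul_cancel (Nat.gcd_dvd_right _ _)]; omega

private lemma summable_aux {y : ℂ} (hy : ‖y‖ < 1) (s : ℝ) :
    Summable fun i : ℕ => ‖y ^ (i + 1) / ((((i : ℝ) + 1) ^ s : ℝ) : ℂ)‖ := by
  set k : ℕ := ⌈|s|⌉₊ with hk
  have key : Summable fun i : ℕ => ((i + 1 : ℕ) : ℝ) ^ k * ‖y‖ ^ (i + 1) := by
    have h := summable_pow_mul_geometric_of_norm_lt_one (R := ℝ) k
      (r := ‖y‖) (by rwa [Real.norm_eq_abs, abs_norm])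
    exact (h.comp_injective (add_left_injective 1))
  refine Summable.of_nonneg_of_le (fun i => norm_nonneg _) (fun i => ?_) key
  have hpos : (0 : ℝ) < ((i : ℝ) + 1) ^ s := Real.rpow_pos_of_pos (by positivity) s
  rw [norm_div, Complex.norm_real, Real.norm_eq_abs, abs_of_pos hpos, norm_pow,
    div_le_iff₀ hpos]
  have h1 : (1 : ℝ) ≤ (i : ℝ) + 1 := le_add_of_nonneg_left (Nat.cast_nonneg i)
  have hle : (1 : ℝ) ≤ ((i : ℝ) + 1) ^ (k : ℝ) * ((i : ℝ) + 1) ^ s := by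
    rw [← Real.rpow_add (by positivity)]
    refine Real.one_le_rpow h1 ?_
    have h2 := Nat.le_ceil |s|
    have h3 := neg_abs_le s
    simp only [hk]
    linarith
  calc ‖y‖ ^ (i + 1) = ‖y‖ ^ (i + 1) * 1 := by ring
    _ ≤ ‖y‖ ^ (i + 1) * (((i : ℝ) + 1) ^ (k : ℝ) * ((i : ℝ) + 1) ^ s) :=
        mul_le_mul_of_nonneg_left hle (pow_nonneg (norm_nonneg _) _)
    _ = ((i + 1 : ℕ) : ℝ) ^ k * ‖y‖ ^ (i + 1) * ((i : ℝ) + 1) ^ s := by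
        rw [Real.rpow_natCast]; push_cast; ring

end

set_option maxHeartbeats 1000000 in
theorem vpv_first_quadrant_log_identity (y z : ℂ) (hy : ‖y‖ < 1)
    (hz : ‖z‖ < 1) (s t : ℝ) (hst : s + t = 1) :
    ∑' p : {p : ℕ × ℕ // 0 < p.1 ∧ 0 < p.2 ∧ Nat.gcd p.1 p.2 = 1},
        (1 / ((((p : ℕ × ℕ).1 : ℝ) ^ s * ((p : ℕ × ℕ).2 : ℝ) ^ t : ℝ) : ℂ)) *
          (-Complex.log (1 - y ^ (p : ℕ × ℕ).1 * z ^ (p : ℕ × ℕ).2)) =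
      (∑' i : ℕ, y ^ (i + 1) / ((((i : ℝ) + 1) ^ s : ℝ) : ℂ)) *
        (∑' j : ℕ, z ^ (j + 1) / ((((j : ℝ) + 1) ^ t : ℝ) : ℂ)) := by
  classical
  set f : ℕ → ℂ := fun i => y ^ (i + 1) / ((((i : ℝ) + 1) ^ s : ℝ) : ℂ) with hf
  set g : ℕ → ℂ := fun j => z ^ (j + 1) / ((((j : ℝ) + 1) ^ t : ℝ) : ℂ) with hg
  have hfs : Summable fun i => ‖f i‖ := summable_aux hy s
  have hgs : Summable fun j => ‖g j‖ := summable_aux hz t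
  set H : ℕ × ℕ → ℂ := fun q => f q.1 * g q.2 with hH
  have hHs : Summable H := summable_mul_of_summable_norm hfs hgs
  set F : {p : ℕ × ℕ // Pcop p} × ℕ → ℂ := fun x =>
    (1 / ((((x.1 : ℕ × ℕ).1 : ℝ) ^ s * ((x.1 : ℕ × ℕ).2 : ℝ) ^ t : ℝ) : ℂ)) *
      ((y ^ (x.1 : ℕ × ℕ).1 * z ^ (x.1 : ℕ × ℕ).2) ^ (x.2 + 1) / ((x.2 + 1 : ℕ) : ℂ)) with hF
  -- pointwise identity : H (Ecop x) = F x
  have key : ∀ x : {p : ℕ × ℕ // Pcop p} × ℕ, H (Ecop x) = F x := by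
    rintro ⟨⟨⟨a, b⟩, ha, hb, hco⟩, m⟩
    have ha1 : 1 ≤ a * (m + 1) := Nat.one_le_iff_ne_zero.mpr (by positivity)
    have hb1 : 1 ≤ b * (m + 1) := Nat.one_le_iff_ne_zero.mpr (by positivity)
    have hi : a * (m + 1) - 1 + 1 = a * (m + 1) := Nat.succ_pred_eq_of_pos ha1
    have hj : b * (m + 1) - 1 + 1 = b * (m + 1) := Nat.succ_pred_eq_of_pos hb1
    simp only [hH, hF, Ecop, Equiv.coe_fn_mk, hf, hg, hi, hj]
    have cast1 : ((a * (m + 1) - 1 : ℕ) : ℝ) + 1 = ((a : ℝ)) * ((m : ℝ) + 1) := by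
      have h := congrArg (fun n : ℕ => (n : ℝ)) hi; push_cast at h; linarith
    have cast2 : ((b * (m + 1) - 1 : ℕ) : ℝ) + 1 = ((b : ℝ)) * ((m : ℝ) + 1) := by
      have h := congrArg (fun n : ℕ => (n : ℝ)) hj; push_cast at h; linarith
    rw [cast1, cast2]
    have hm1 : (0 : ℝ) < (m : ℝ) + 1 := by positivity
    have hrs : ((a : ℝ) * ((m : ℝ) + 1)) ^ s = (a : ℝ) ^ s * ((m : ℝ) + 1) ^ s :=
      Real.mul_rpow (Nat.cast_nonneg a) hm1.le
    have hrt : ((b : ℝ) * ((m : ℝ) + 1)) ^ t = (b : ℝ) ^ t * ((m : ℝ) + 1) ^ t :=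
      Real.mul_rpow (Nat.cast_nonneg b) hm1.le
    have hmst : ((m : ℝ) + 1) ^ s * ((m : ℝ) + 1) ^ t = (m : ℝ) + 1 := by
      rw [← Real.rpow_add hm1, hst, Real.rpow_one]
    have hpow : y ^ (a * (m + 1)) * z ^ (b * (m + 1)) = (y ^ a * z ^ b) ^ (m + 1) := by
      rw [mul_pow, ← pow_mul, ← pow_mul]
    rw [hrs, hrt, div_mul_div_comm, one_div, ← hpow]
    have hden : ((((a : ℝ) ^ s * ((m : ℝ) + 1) ^ s : ℝ)) : ℂ) *
        ((((b : ℝ) ^ t * ((m : ℝ) + 1) ^ t : ℝ)) : ℂ) =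
        ((((a : ℝ) ^ s * (b : ℝ) ^ t : ℝ)) : ℂ) * ((m + 1 : ℕ) : ℂ) := by
      rw [← Complex.ofReal_mul]
      have : ((a : ℝ) ^ s * ((m : ℝ) + 1) ^ s) * ((b : ℝ) ^ t * ((m : ℝ) + 1) ^ t) =
          ((a : ℝ) ^ s * (b : ℝ) ^ t) * ((m : ℝ) + 1) := by
        linear_combination (a : ℝ) ^ s * (b : ℝ) ^ t * hmst
      rw [this]
      push_cast
      ring
    rw [hden]
    ring
  -- F summable
  have hFs : Summable F := ((Ecop.summable_iff (f := H)).mpr hHs).congr key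
  -- inner sums : log series
  have hlog : ∀ p : {p : ℕ × ℕ // Pcop p},
      HasSum (fun m : ℕ => (y ^ (p : ℕ × ℕ).1 * z ^ (p : ℕ × ℕ).2) ^ (m + 1) / ((m + 1 : ℕ) : ℂ))
        (-Complex.log (1 - y ^ (p : ℕ × ℕ).1 * z ^ (p : ℕ × ℕ).2)) := by
    rintro ⟨⟨a, b⟩, ha, hb, hco⟩
    have hya : ‖y‖ ^ a ≤ ‖y‖ := by
      calc ‖y‖ ^ a ≤ ‖y‖ ^ 1 := pow_le_pow_of_le_one (norm_nonneg _) hy.le ha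
        _ = ‖y‖ := pow_one _
    have hzb : ‖z‖ ^ b ≤ 1 := pow_le_one₀ (norm_nonneg _) hz.le
    have hw : ‖y ^ a * z ^ b‖ < 1 := by
      rw [norm_mul, norm_pow, norm_pow]
      calc ‖y‖ ^ a * ‖z‖ ^ b ≤ ‖y‖ * 1 :=
            mul_le_mul hya hzb (by positivity) (norm_nonneg _)
        _ = ‖y‖ := mul_one _
        _ < 1 := hy
    have h0 := Complex.hasSum_taylorSeries_neg_log hw
    have h1 : HasSum (fun n : ℕ => (y ^ a * z ^ b) ^ (n + 1) / ((n + 1 : ℕ) : ℂ))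
        (-Complex.log (1 - y ^ a * z ^ b)) := by
      refine (hasSum_nat_add_iff (f := fun n : ℕ => (y ^ a * z ^ b) ^ n / (n : ℂ)) 1).mpr ?_
      simpa using h0
    exact h1
  -- assemble
  calc ∑' p : {p : ℕ × ℕ // Pcop p},
        (1 / ((((p : ℕ × ℕ).1 : ℝ) ^ s * ((p : ℕ × ℕ).2 : ℝ) ^ t : ℝ) : ℂ)) *
          (-Complex.log (1 - y ^ (p : ℕ × ℕ).1 * z ^ (p : ℕ × ℕ).2))
      = ∑' (p : {p : ℕ × ℕ // Pcop p}) (m : ℕ), F (p, m) := by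
        refine tsum_congr fun p => ?_
        rw [← (hlog p).tsum_eq, ← tsum_mul_left]
    _ = ∑' x : {p : ℕ × ℕ // Pcop p} × ℕ, F x := (Summable.tsum_prod' hFs fun p => hFs.prod_factor p).symm
    _ = ∑' x : {p : ℕ × ℕ // Pcop p} × ℕ, H (Ecop x) := tsum_congr fun x => (key x).symm
    _ = ∑' q : ℕ × ℕ, H q := Ecop.tsum_eq H
    _ = (∑' i, f i) * (∑' j, g j) := (tsum_mul_tsum_of_summable_norm hfs hgs).symm
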